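/- Let {a_n} be a sequence of nonnegative reals such that there is a subsequence {a_{n_j}} with a_{n_j} < a_{n_j+1} for all j. Then there exists a nondecreasing sequence {m_k} of natural numbers with m_k → ∞ such that, for all sufficiently large k, a_{m_k} ≤ a_{m_k+1} and a_k ≤ a_{m_k+1}. -/
import Mathlib


open Filter Topology

theorem stmt_7 (a : ℕ → ℝ) (ha : ∀ n, 0 ≤ a n)
    (h : ∃ φ : ℕ → ℕ, StrictMono φ ∧ ∀ j, a (φ j) < a (φ j + 1)) :
    ∃ m : ℕ → ℕ, Monotone m ∧ Tendsto m atTop atTop ∧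
      ∀ᶠ k in atTop, a (m k) ≤ a (m k + 1) ∧ a k ≤ a (m k + 1) := by
  classical
  obtain ⟨φ, hφ, hup⟩ := h
  set P : ℕ → Prop := fun n => a n ≤ a (n + 1) with hP
  have hPφ : ∀ j, P (φ j) := fun j => (hup j).le
  refine ⟨fun k => Nat.findGreatest P (max k (φ 0)), ?_, ?_, ?_⟩
  · intro i j hij
    exact Nat.findGreatest_mono (fun _ h => h) (max_le_max hij le_rfl)
  · rw [tendsto_atTop_atTop]
    intro b
    refine ⟨φ b, fun k hk => ?_⟩
    calc b ≤ φ b := hφ.le_apply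
      _ ≤ Nat.findGreatest P (max k (φ 0)) :=
        Nat.le_findGreatest (le_trans hk (le_max_left _ _)) (hPφ b)
  · filter_upwards [eventually_ge_atTop (φ 0)] with k hk
    have hmax : max k (φ 0) = k := max_eq_left hk
    set M := Nat.findGreatest P (max k (φ 0)) with hM
    have hMk : M ≤ k := by rw [hM, hmax]; exact Nat.findGreatest_le k
    have hMP : P M := Nat.findGreatest_spec (le_max_right k (φ 0)) (hPφ 0)
    refine ⟨hMP, ?_⟩
    have key : ∀ n, M ≤ n → n ≤ k → a n ≤ a (M + 1) := by
      intro n hn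
      induction n, hn using Nat.le_induction with
      | base => intro _; exact hMP
      | succ n hn ih =>
        intro hnk
        rcases eq_or_lt_of_le hn with he | hl
        · rw [← he]
        · have hnP : ¬ P n :=
            Nat.findGreatest_is_greatest (by rw [← hM]; exact hl)
              (by rw [hmax]; omega)
          have hlt : a (n + 1) < a n := lt_of_not_ge hnP
          exact le_trans hlt.le (ih (by omega))
    exact key k hMk le_rfl
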